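/- Let F be an intersecting family of k-subsets of a vertex set V, let v ∈ V, and let X_0, Y_0 be disjoint subsets of V \ {v}, each of size at least k + 1, such that for every (k−1)-subset W of X_0 and every (k−1)-subset W of Y_0, the set W ∪ {v} belongs to F. Suppose |X_0|, |Y_0| ≥ k + ⌈ℓ/2⌉ + 1 for some positive integer ℓ, and X_0 ∪ Y_0 ∪ {v} = V with |V \ (X_0 ∪ Y_0 ∪ {v})| = 0. Then for every (k−1)-subset W ⊆ V \ {v}, the set W ∪ {v} is a member of F, provided every (k−1)-subset of V has positive degree in F. -/

import Mathlib

open Finset in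
private lemma aux_star {α : Type*} [Fintype α] [DecidableEq α] (k : ℕ)
    (F : Finset (Finset α))
    (hcard : ∀ e ∈ F, e.card = k + 1)
    (hint : ∀ A ∈ F, ∀ B ∈ F, (A ∩ B).Nonempty)
    (v : α) :
    ∀ t : ℕ, ∀ X Y : Finset α, v ∉ X → v ∉ Y → Disjoint X Y →
      k + 2 ≤ X.card → k + 2 ≤ Y.card → X ∪ Y ∪ {v} = Finset.univ →
      (∀ W ⊆ X, W.card = k → W ∪ {v} ∈ F) →
      (∀ W ⊆ Y, W.card = k → W ∪ {v} ∈ F) →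
      (∀ W : Finset α, W.card = k → ∃ e ∈ F, W ⊆ e) →
      ∀ W : Finset α, v ∉ W → W.card = k → (W ∩ Y).card ≤ t → W ∪ {v} ∈ F := by
  intro t
  induction t with
  | zero =>
    intro X Y hvX hvY hdisj hX hY hcov hXs hYs hdeg W hvW hW hWY
    have hWYe : W ∩ Y = ∅ := card_eq_zero.mp (Nat.le_zero.mp hWY)
    apply hXs W ?_ hW
    intro w hw
    have hwu : w ∈ X ∪ Y ∪ {v} := hcov ▸ mem_univ w
    simp only [mem_union, mem_singleton] at hwu
    rcases hwu with (h | h) | h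
    · exact h
    · exact absurd (mem_inter.mpr ⟨hw, h⟩) (by simp [hWYe])
    · exact absurd (h ▸ hw) hvW
  | succ t ih =>
    intro X Y hvX hvY hdisj hX hY hcov hXs hYs hdeg W hvW hW hWY
    by_cases hle : (W ∩ Y).card ≤ t
    · exact ih X Y hvX hvY hdisj hX hY hcov hXs hYs hdeg W hvW hW hle
    have hs : (W ∩ Y).card = t + 1 := by omega
    have htk : (W ∩ Y).card ≤ k := by
      have := card_le_card (inter_subset_left : W ∩ Y ⊆ W)
      omega
    obtain ⟨e, heF, hWe⟩ := hdeg W hW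
    have hecard : e.card = k + 1 := hcard e heF
    have hsd : (e \ W).card = 1 := by rw [card_sdiff_of_subset hWe]; omega
    obtain ⟨u, hu⟩ := card_eq_one.mp hsd
    have heu : W ∪ {u} = e := by rw [← hu, union_sdiff_of_subset hWe]
    by_cases huv : u = v
    · subst huv; exact heu ▸ heF
    have hve : v ∉ e := by
      intro hv
      rw [← heu, mem_union, mem_singleton] at hv
      rcases hv with h | h
      · exact hvW h
      · exact huv h.symm
    have hYe : (Y ∩ e).card ≤ t + 2 := by
      have hsub : Y ∩ e ⊆ (W ∩ Y) ∪ {u} := by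
        intro w hw
        rw [mem_inter] at hw
        have := hw.2
        rw [← heu, mem_union] at this
        rcases this with h | h
        · exact mem_union_left _ (mem_inter.mpr ⟨h, hw.1⟩)
        · exact mem_union_right _ h
      calc (Y ∩ e).card ≤ ((W ∩ Y) ∪ {u}).card := card_le_card hsub
        _ ≤ (W ∩ Y).card + 1 := (card_union_le _ _).trans (by simp)
        _ = t + 2 := by omega
    have hXe : (X ∩ e).card ≤ k - t := by
      have h1 : (W ∩ Y) ⊆ Y ∩ e := fun w hw =>
        mem_inter.mpr ⟨(mem_inter.mp hw).2, hWe (mem_inter.mp hw).1⟩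
      have h2 : (X ∩ e) ∪ (Y ∩ e) ⊆ e := by
        intro w hw
        rcases mem_union.mp hw with h | h <;> exact (mem_inter.mp h).2
      have h3 : Disjoint (X ∩ e) (Y ∩ e) := hdisj.mono inter_subset_left inter_subset_left
      have h4 := card_le_card h2
      rw [card_union_of_disjoint h3] at h4
      have h5 := card_le_card h1
      omega
    have hsdY : (Y \ e).card + (Y ∩ e).card = Y.card := by
      rw [← card_union_of_disjoint (disjoint_sdiff_inter Y e), sdiff_union_inter]
    have hsdX : (X \ e).card + (X ∩ e).card = X.card := by
      rw [← card_union_of_disjoint (disjoint_sdiff_inter X e), sdiff_union_inter]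
    have hYse : k - t ≤ (Y \ e).card := by omega
    have hXse : t ≤ (X \ e).card := by omega
    obtain ⟨A, hAsub, hAcard⟩ := exists_subset_card_eq hYse
    obtain ⟨B, hBsub, hBcard⟩ := exists_subset_card_eq hXse
    have hAY : A ⊆ Y := hAsub.trans sdiff_subset
    have hBX : B ⊆ X := hBsub.trans sdiff_subset
    have hABdisj : Disjoint A B := hdisj.symm.mono hAY hBX
    have hW'card : (A ∪ B).card = k := by
      rw [card_union_of_disjoint hABdisj, hAcard, hBcard]; omega
    have hvW' : v ∉ A ∪ B := by
      rw [mem_union]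
      rintro (h | h)
      exacts [hvY (hAY h), hvX (hBX h)]
    have hW'X : ((A ∪ B) ∩ X).card ≤ t := by
      have hsub : (A ∪ B) ∩ X ⊆ B := by
        intro w hw
        rw [mem_inter, mem_union] at hw
        rcases hw.1 with h | h
        · exact absurd hw.2 (disjoint_left.mp hdisj.symm (hAY h))
        · exact h
      exact (card_le_card hsub).trans_eq hBcard
    have hcov' : Y ∪ X ∪ {v} = Finset.univ := by
      rw [union_comm Y X]; exact hcov
    have hmem := ih Y X hvY hvX hdisj.symm hY hX hcov' hYs hXs hdeg (A ∪ B) hvW' hW'card hW'X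
    obtain ⟨w, hw⟩ := hint e heF (A ∪ B ∪ {v}) hmem
    rw [mem_inter] at hw
    exfalso
    rcases mem_union.mp hw.2 with h | h
    · rcases mem_union.mp h with h' | h'
      · exact (mem_sdiff.mp (hAsub h')).2 hw.1
      · exact (mem_sdiff.mp (hBsub h')).2 hw.1
    · exact hve (mem_singleton.mp h ▸ hw.1)

/-- Bootstrapping step: two large complete stars centered at v covering the whole
vertex set together with positive codegree force every (k−1)-set W ⊆ V \ {v} to
satisfy W ∪ {v} ∈ F. -/
theorem stmt11 {α : Type*} [Fintype α] [DecidableEq α] (k ℓ : ℕ) (hℓ : 1 ≤ ℓ)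
    (F : Finset (Finset α))
    (hcard : ∀ e ∈ F, e.card = k)
    (hint : ∀ A ∈ F, ∀ B ∈ F, (A ∩ B).Nonempty)
    (v : α) (X₀ Y₀ : Finset α)
    (hvX : v ∉ X₀) (hvY : v ∉ Y₀)
    (hdisj : Disjoint X₀ Y₀)
    (hXbig : k + 1 ≤ X₀.card) (hYbig : k + 1 ≤ Y₀.card)
    (hXbig' : k + ⌈(ℓ : ℝ) / 2⌉₊ + 1 ≤ X₀.card)
    (hYbig' : k + ⌈(ℓ : ℝ) / 2⌉₊ + 1 ≤ Y₀.card)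
    (hcover : X₀ ∪ Y₀ ∪ {v} = Finset.univ)
    (hXstar : ∀ W ⊆ X₀, W.card = k - 1 → W ∪ {v} ∈ F)
    (hYstar : ∀ W ⊆ Y₀, W.card = k - 1 → W ∪ {v} ∈ F)
    (hdeg : ∀ W : Finset α, W.card = k - 1 → ∃ e ∈ F, W ⊆ e) :
    ∀ W : Finset α, v ∉ W → W.card = k - 1 → W ∪ {v} ∈ F := by
  have hl1 : 1 ≤ ⌈(ℓ : ℝ) / 2⌉₊ := by
    have hpos : (0 : ℝ) < (ℓ : ℝ) / 2 := by
      have : (1 : ℝ) ≤ (ℓ : ℝ) := by exact_mod_cast hℓ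
      linarith
    exact Nat.ceil_pos.mpr hpos
  rcases k with _ | k
  · intro W _ _
    exfalso
    have h0 := hXstar ∅ (Finset.empty_subset _) (by simp)
    have := hcard _ h0
    simp at this
  · intro W hvW hWc
    exact aux_star k F hcard hint v ((W ∩ Y₀).card) X₀ Y₀ hvX hvY hdisj
      (by omega) (by omega) hcover hXstar hYstar hdeg W hvW hWc le_rfl
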